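/- Let a : ℕ → ℚ satisfy a(0) = 0 and a(n) = n·a(n−1) + (n−1)·(n−1)! for all n ≥ 1. Then a(n) = n!·(n − H_n) for all n ≥ 0, where H_m = ∑_{k=1}^{m} 1/k is the m-th harmonic number (H₀ = 0). -/
import Mathlib


/-- if `a : ℕ → ℚ` satisfies `a 0 = 0` and `a n = n·a (n−1) + (n−1)·(n−1)!`
for `n ≥ 1`, then `a n = n!·(n − H_n)` where `H_m = ∑_{k=1}^m 1/k` (`H₀ = 0`). -/
theorem g4_series_closed_form (a : ℕ → ℚ) (h0 : a 0 = 0)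
    (hrec : ∀ n : ℕ, 1 ≤ n →
      a n = n * a (n - 1) + ((n : ℚ) - 1) * ((n - 1).factorial : ℚ)) :
    ∀ n : ℕ, a n = (n.factorial : ℚ) * ((n : ℚ) - ∑ k ∈ Finset.Icc 1 n, (1 : ℚ) / k) := by
  intro n
  induction n with
  | zero => simp [h0]
  | succ n ih =>
    have h := hrec (n + 1) (Nat.le_add_left 1 n)
    simp only [Nat.add_sub_cancel] at h
    rw [h, ih, Finset.sum_Icc_succ_top (by omega : 1 ≤ n + 1)]
    have hfac : ((n + 1).factorial : ℚ) = ((n : ℚ) + 1) * (n.factorial : ℚ) := by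
      rw [Nat.factorial_succ]; push_cast; ring
    have hne : ((n : ℚ) + 1) ≠ 0 := by positivity
    push_cast [hfac]
    field_simp
    ring
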